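/- arXiv:0903.1699 — 2 statements merged into one kernel-verified Lean document; each statement's English description precedes it below -/
import Mathlib

section
/- Calderón–Zygmund cube decomposition lemma: Let r > 0 and A ⊂ B ⊂ Q_r be measurable subsets of the cube Q_r ⊂ ℝⁿ. Let δ ∈ (0,1) be such that (i) |A| ≤ δ|Q_r|, and (ii) for every dyadic subcube Q of Q_r with |A ∩ Q| > δ|Q|, the predecessor Q̃ of Q is contained in B. Then |A| ≤ δ|B|. -/
open MeasureTheory
open scoped ENNReal

/-- The half-open cube with lower-left corner `c` and side `r`. -/
def ccube {n : ℕ} (r : ℝ) (c : Fin n → ℝ) : Set (EuclideanSpace ℝ (Fin n)) :=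
  {y | ∀ i, c i ≤ y i ∧ y i < c i + r}

/-- The dyadic subcube of generation `k` with index `m` of the cube `ccube r c`. -/
def dyadicSub {n : ℕ} (r : ℝ) (c : Fin n → ℝ) (k : ℕ) (m : Fin n → ℕ) :
    Set (EuclideanSpace ℝ (Fin n)) :=
  ccube (r / 2 ^ k) (fun i => c i + (m i : ℝ) * (r / 2 ^ k))

namespace CZ

variable {n : ℕ}

abbrev Idx (n : ℕ) := ℕ × (Fin n → ℕ)

/-- The dyadic cube indexed by `p`. -/
def cube (r : ℝ) (c : Fin n → ℝ) (p : Idx n) : Set (EuclideanSpace ℝ (Fin n)) :=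
  dyadicSub r c p.1 p.2

def valid (p : Idx n) : Prop := ∀ i, p.2 i < 2 ^ p.1

/-- `p` indexes a subcube of the cube indexed by `q`. -/
def below (p q : Idx n) : Prop := q.1 ≤ p.1 ∧ ∀ i, p.2 i / 2 ^ (p.1 - q.1) = q.2 i

lemma mem_cube {r : ℝ} {c : Fin n → ℝ} {p : Idx n} {x : EuclideanSpace ℝ (Fin n)} :
    x ∈ cube r c p ↔ ∀ i, c i + p.2 i * (r / 2 ^ p.1) ≤ x i ∧
      x i < c i + p.2 i * (r / 2 ^ p.1) + r / 2 ^ p.1 := Iff.rfl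

lemma below_refl (p : Idx n) : below p p :=
  ⟨le_refl _, fun i => by simp⟩

lemma below_trans {p q t : Idx n} (h1 : below p q) (h2 : below q t) : below p t := by
  obtain ⟨ha1, ha2⟩ := h1
  obtain ⟨hb1, hb2⟩ := h2
  refine ⟨hb1.trans ha1, fun i => ?_⟩
  have hpow : (2:ℕ) ^ (p.1 - q.1) * 2 ^ (q.1 - t.1) = 2 ^ (p.1 - t.1) := by
    rw [← pow_add]; congr 1; omega
  rw [← hpow, ← Nat.div_div_eq_div_mul]
  rw [ha2 i, hb2 i]

lemma eq_of_below_of_le {p q : Idx n} (h : below p q) (hk : p.1 ≤ q.1) : p = q := by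
  have hk' : p.1 = q.1 := le_antisymm hk h.1
  have : p.2 = q.2 := by
    funext i
    have := h.2 i
    rwa [hk', Nat.sub_self, pow_zero, Nat.div_one] at this
  exact Prod.ext hk' this

lemma lt_of_below_ne {p q : Idx n} (h : below p q) (hne : p ≠ q) : q.1 < p.1 := by
  rcases lt_or_ge q.1 p.1 with h' | h'
  · exact h'
  · exact absurd (eq_of_below_of_le h h') hne

section OneDim

lemma interval_subset {s : ℝ} (hs : 0 < s) (d a b : ℕ) (h : a / 2 ^ d = b) (co : ℝ) {x : ℝ}
    (hx1 : co + a * s ≤ x) (hx2 : x < co + a * s + s) :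
    co + b * (2 ^ d * s) ≤ x ∧ x < co + b * (2 ^ d * s) + 2 ^ d * s := by
  have hmod := Nat.div_add_mod a (2 ^ d)
  rw [h] at hmod
  have ht : a % 2 ^ d < 2 ^ d := Nat.mod_lt _ (by positivity)
  have h1 : (2:ℝ) ^ d * b + (a % 2 ^ d : ℕ) = a := by exact_mod_cast congrArg (Nat.cast (R := ℝ)) hmod
  have h2 : ((a % 2 ^ d : ℕ) : ℝ) + 1 ≤ (2:ℝ) ^ d := by
    have := (Nat.cast_le (α := ℝ)).2 (Nat.succ_le_of_lt ht)
    push_cast at this; linarith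
  have hA : (2:ℝ) ^ d * b ≤ (a:ℝ) := by
    have := Nat.cast_nonneg (α := ℝ) (a % 2 ^ d); linarith
  have hB : (a:ℝ) + 1 ≤ 2 ^ d * b + 2 ^ d := by linarith
  constructor
  · nlinarith [mul_le_mul_of_nonneg_right hA hs.le]
  · nlinarith [mul_le_mul_of_nonneg_right hB hs.le]

lemma interval_disjoint {s : ℝ} (hs : 0 < s) (d a b : ℕ) (h : a / 2 ^ d ≠ b) (co : ℝ) {x : ℝ}
    (hx1 : co + a * s ≤ x) (hx2 : x < co + a * s + s)
    (hy1 : co + b * (2 ^ d * s) ≤ x) (hy2 : x < co + b * (2 ^ d * s) + 2 ^ d * s) : False := by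
  apply h
  have hd : (0:ℝ) < 2 ^ d := by positivity
  have h1 : (b:ℝ) * 2 ^ d < a + 1 := by
    have := lt_of_le_of_lt hy1 hx2
    nlinarith
  have h2 : (a:ℝ) < (b + 1) * 2 ^ d := by
    have := lt_of_le_of_lt hx1 hy2
    nlinarith
  have h1' : b * 2 ^ d ≤ a := by
    have : (b * 2 ^ d : ℕ) < (a + 1 : ℕ) := by exact_mod_cast (by push_cast; linarith : ((b * 2 ^ d : ℕ) : ℝ) < ((a + 1 : ℕ) : ℝ))
    omega
  have h2' : a < (b + 1) * 2 ^ d := by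
    exact_mod_cast (by push_cast; linarith : ((a : ℕ) : ℝ) < (((b + 1) * 2 ^ d : ℕ) : ℝ))
  exact Nat.div_eq_of_lt_le h1' h2'

end OneDim

lemma pow_div_aux {r : ℝ} (p q : Idx n) (hk : q.1 ≤ p.1) :
    (2:ℝ) ^ (p.1 - q.1) * (r / 2 ^ p.1) = r / 2 ^ q.1 := by
  have hpow : (2:ℝ) ^ (q.1) * (2:ℝ) ^ (p.1 - q.1) = 2 ^ p.1 := by
    rw [← pow_add]; congr 1; omega
  have h1 : (2:ℝ) ^ p.1 ≠ 0 := by positivity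
  have h2 : (2:ℝ) ^ q.1 ≠ 0 := by positivity
  field_simp
  linear_combination r * hpow

lemma cube_subset {r : ℝ} (hr : 0 < r) (c : Fin n → ℝ) {p q : Idx n} (h : below p q) :
    cube r c p ⊆ cube r c q := by
  intro x hx
  rw [mem_cube] at hx ⊢
  intro i
  have hs : 0 < r / 2 ^ p.1 := by positivity
  have := interval_subset hs (p.1 - q.1) (p.2 i) (q.2 i) (h.2 i) (c i) (hx i).1 (hx i).2
  rwa [pow_div_aux p q h.1] at this

lemma cube_disjoint {r : ℝ} (hr : 0 < r) (c : Fin n → ℝ) {p q : Idx n} (hk : q.1 ≤ p.1)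
    (h : ¬ below p q) : Disjoint (cube r c p) (cube r c q) := by
  rw [Set.disjoint_left]
  intro x hxp hxq
  simp only [below, not_and, not_forall] at h
  obtain ⟨i, hi⟩ := h hk
  rw [mem_cube] at hxp hxq
  have hs : 0 < r / 2 ^ p.1 := by positivity
  have h1 := (hxq i).1
  have h2 := (hxq i).2
  rw [← pow_div_aux p q hk] at h1 h2
  exact interval_disjoint hs (p.1 - q.1) (p.2 i) (q.2 i) hi (c i) (hxp i).1 (hxp i).2 h1 h2

lemma dichotomy {r : ℝ} (hr : 0 < r) (c : Fin n → ℝ) (p q : Idx n) :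
    below p q ∨ below q p ∨ Disjoint (cube r c p) (cube r c q) := by
  rcases le_total q.1 p.1 with h | h
  · by_cases hb : below p q
    · exact Or.inl hb
    · exact Or.inr (Or.inr (cube_disjoint hr c h hb))
  · by_cases hb : below q p
    · exact Or.inr (Or.inl hb)
    · exact Or.inr (Or.inr ((cube_disjoint hr c h hb).symm))

/-- Every element of a family of indices lies below a maximal element. -/
lemma exists_maximal (S : Set (Idx n)) :
    ∀ p ∈ S, ∃ q ∈ S, below p q ∧ ∀ q' ∈ S, below q q' → q' = q := by
  have H : ∀ k : ℕ, ∀ p ∈ S, p.1 ≤ k → ∃ q ∈ S, below p q ∧ ∀ q' ∈ S, below q q' → q' = q := by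
    intro k
    induction k with
    | zero =>
      intro p hp hk
      refine ⟨p, hp, below_refl p, fun q' hq'S hq'b => ?_⟩
      by_contra hne
      have := lt_of_below_ne hq'b (fun h => hne h.symm)
      omega
    | succ k IH =>
      intro p hp hk
      by_cases hmax : ∀ q' ∈ S, below p q' → q' = p
      · exact ⟨p, hp, below_refl p, hmax⟩
      · push_neg at hmax
        obtain ⟨q', hq'S, hq'b, hq'ne⟩ := hmax
        have hlt : q'.1 < p.1 := lt_of_below_ne hq'b (fun h => hq'ne h.symm)
        obtain ⟨q, hqS, hqb, hqmax⟩ := IH q' hq'S (by omega)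
        exact ⟨q, hqS, below_trans hq'b hqb, hqmax⟩
  intro p hp
  exact H p.1 p hp le_rfl

lemma measurableSet_ccube (r' : ℝ) (c' : Fin n → ℝ) : MeasurableSet (ccube r' c') := by
  have h : ccube r' c' =
      ⋂ i, (fun y : EuclideanSpace ℝ (Fin n) => y i) ⁻¹' Set.Ico (c' i) (c' i + r') := by
    ext y; simp [ccube, Set.mem_Ico]
  rw [h]
  exact MeasurableSet.iInter fun i => (by fun_prop : Measurable fun y : EuclideanSpace ℝ (Fin n) => y i) measurableSet_Ico

lemma measurableSet_cube (r : ℝ) (c : Fin n → ℝ) (p : Idx n) : MeasurableSet (cube r c p) :=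
  measurableSet_ccube _ _

lemma volume_ccube_ne_top (r' : ℝ) (c' : Fin n → ℝ) :
    volume (ccube r' c') ≠ ⊤ := by
  have he : ccube r' c' = (MeasurableEquiv.toLp 2 (Fin n → ℝ)).symm ⁻¹'
      (Set.univ.pi fun i => Set.Ico (c' i) (c' i + r')) := by
    ext y
    simp [ccube, Set.mem_Ico]
  rw [he, (EuclideanSpace.volume_preserving_symm_measurableEquiv_toLp (Fin n)).measure_preimage
    ((MeasurableSet.univ_pi fun i => measurableSet_Ico).nullMeasurableSet)]
  rw [volume_pi_pi]
  simp only [Real.volume_Ico, add_sub_cancel_left]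
  exact (ENNReal.prod_lt_top fun i _ => ENNReal.ofReal_lt_top).ne

/-- Main covering estimate: if on each cube of a family the density of `A''` is at most `δ'`,
then the density of `A''` on the union is at most `δ'`. -/
lemma key {r : ℝ} (hr : 0 < r) (c : Fin n → ℝ) (T : Set (Idx n))
    (A'' : Set (EuclideanSpace ℝ (Fin n))) (hA'' : MeasurableSet A'') {δ' : ℝ≥0∞}
    (hT : ∀ p ∈ T, volume (A'' ∩ cube r c p) ≤ δ' * volume (cube r c p)) :
    volume (A'' ∩ ⋃ p ∈ T, cube r c p) ≤ δ' * volume (⋃ p ∈ T, cube r c p) := by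
  set M : Set (Idx n) := {p ∈ T | ∀ q ∈ T, below p q → q = p} with hM
  have hMT : M ⊆ T := fun p hp => hp.1
  have hcover : (⋃ p ∈ T, cube r c p) = ⋃ p ∈ M, cube r c p := by
    apply Set.Subset.antisymm
    · intro x hx
      simp only [Set.mem_iUnion] at hx ⊢
      obtain ⟨p, hpT, hxp⟩ := hx
      obtain ⟨q, hqT, hqb, hqmax⟩ := exists_maximal T p hpT
      exact ⟨q, ⟨hqT, hqmax⟩, cube_subset hr c hqb hxp⟩
    · exact Set.iUnion₂_mono' fun p hp => ⟨p, hMT hp, subset_rfl⟩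
  have hdisj : M.PairwiseDisjoint (cube r c) := by
    intro p hp q hq hne
    rcases dichotomy (r := r) hr c p q with h | h | h
    · exact absurd (hp.2 q hq.1 h) hne.symm
    · exact absurd (hq.2 p hp.1 h) hne
    · exact h
  have hcnt : M.Countable := M.to_countable
  have hdisj' : M.PairwiseDisjoint (fun p => A'' ∩ cube r c p) := fun p hp q hq hne =>
    (hdisj hp hq hne).mono Set.inter_subset_right Set.inter_subset_right
  calc volume (A'' ∩ ⋃ p ∈ T, cube r c p)
      = volume (⋃ p ∈ M, A'' ∩ cube r c p) := by rw [hcover, Set.inter_iUnion₂]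
    _ = ∑' p : M, volume (A'' ∩ cube r c (p : Idx n)) :=
        measure_biUnion hcnt hdisj' fun p _ => hA''.inter (measurableSet_cube r c p)
    _ ≤ ∑' p : M, δ' * volume (cube r c (p : Idx n)) :=
        ENNReal.tsum_le_tsum fun p => hT p (hMT p.2)
    _ = δ' * ∑' p : M, volume (cube r c (p : Idx n)) := ENNReal.tsum_mul_left
    _ = δ' * volume (⋃ p ∈ M, cube r c p) := by
        rw [measure_biUnion hcnt hdisj fun p _ => measurableSet_cube r c p]
    _ = δ' * volume (⋃ p ∈ T, cube r c p) := by rw [hcover]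

lemma exists_good_ancestor (Bad : Idx n → Prop)
    (hroot : ∀ q, valid q → q.1 = 0 → ¬ Bad q) :
    ∀ q, valid q → Bad q → ∃ p, valid p ∧ below q p ∧ ¬ Bad p ∧
      ∃ q', valid q' ∧ Bad q' ∧ 1 ≤ q'.1 ∧ p = (q'.1 - 1, fun i => q'.2 i / 2) := by
  have H : ∀ k, ∀ q, valid q → Bad q → q.1 ≤ k → ∃ p, valid p ∧ below q p ∧ ¬ Bad p ∧
      ∃ q', valid q' ∧ Bad q' ∧ 1 ≤ q'.1 ∧ p = (q'.1 - 1, fun i => q'.2 i / 2) := by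
    intro k
    induction k with
    | zero => intro q hv hb hk; exact absurd hb (hroot q hv (by omega))
    | succ k IH =>
      intro q hv hb hk
      have h1 : 1 ≤ q.1 := by
        by_contra h
        exact hroot q hv (by omega) hb
      have hpow : 2 ^ (q.1 - 1) * 2 = 2 ^ q.1 := by rw [← pow_succ]; congr 1; omega
      set p₀ : Idx n := (q.1 - 1, fun i => q.2 i / 2) with hp₀
      have hp1 : p₀.1 = q.1 - 1 := rfl
      have hv₀ : valid p₀ := by
        intro i
        have hvi := hv i
        show q.2 i / 2 < 2 ^ (q.1 - 1)
        rw [Nat.div_lt_iff_lt_mul (by norm_num)]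
        omega
      have hb₀ : below q p₀ := by
        refine ⟨by omega, fun i => ?_⟩
        have h2 : q.1 - (q.1 - 1) = 1 := by omega
        show q.2 i / 2 ^ (q.1 - (q.1 - 1)) = q.2 i / 2
        rw [h2, pow_one]
      by_cases hB : Bad p₀
      · obtain ⟨p, hpv, hpb, hpg, hw⟩ := IH p₀ hv₀ hB (by omega)
        exact ⟨p, hpv, below_trans hb₀ hpb, hpg, hw⟩
      · exact ⟨p₀, hv₀, hb₀, hB, q, hv, hb, h1, rfl⟩
  intro q hv hb
  exact H q.1 q hv hb le_rfl

lemma exists_small_cube {r : ℝ} (hr : 0 < r) (c : Fin n → ℝ)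
    {x : EuclideanSpace ℝ (Fin n)} (hx : x ∈ ccube r c) {ε : ℝ} (hε : 0 < ε) :
    ∃ p : Idx n, valid p ∧ x ∈ cube r c p ∧ cube r c p ⊆ Metric.ball x ε := by
  have hx' : ∀ i, c i ≤ x i ∧ x i < c i + r := hx
  obtain ⟨k, hk⟩ := exists_pow_lt_of_lt_one
    (show (0:ℝ) < ε / ((n + 1) * r) by positivity) (by norm_num : (1/2 : ℝ) < 1)
  set s : ℝ := r / 2 ^ k with hs
  have hs0 : 0 < s := by positivity
  have hsmall : (n + 1 : ℝ) * s < ε := by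
    have h2 : (1/2 : ℝ) ^ k = 1 / 2 ^ k := by rw [div_pow]; norm_num
    have hlt : s < ε / ((n+1) * r) * r := by
      calc s = (1/2:ℝ)^k * r := by rw [h2, hs]; ring
        _ < ε / ((n+1)*r) * r := mul_lt_mul_of_pos_right hk hr
    calc (n+1:ℝ) * s < (n+1) * (ε / ((n+1)*r) * r) := by
          exact mul_lt_mul_of_pos_left hlt (by positivity)
      _ = ε := by field_simp
  have hrs : (2:ℝ) ^ k * s = r := by rw [hs]; field_simp
  set m : Fin n → ℕ := fun i => ⌊(x i - c i) / s⌋₊ with hm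
  have hnn : ∀ i, 0 ≤ (x i - c i) / s := fun i => div_nonneg (by linarith [(hx' i).1]) hs0.le
  have hfl : ∀ i, (m i : ℝ) ≤ (x i - c i) / s := fun i => Nat.floor_le (hnn i)
  have hfu : ∀ i, (x i - c i) / s < m i + 1 := fun i => Nat.lt_floor_add_one _
  have hmem : x ∈ cube r c (k, m) := by
    rw [mem_cube]
    intro i
    constructor
    · have := (le_div_iff₀ hs0).1 (hfl i)
      show c i + (m i : ℝ) * (r / 2 ^ k) ≤ x i
      rw [← hs]; linarith
    · have := (div_lt_iff₀ hs0).1 (hfu i)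
      show x i < c i + (m i : ℝ) * (r / 2 ^ k) + r / 2 ^ k
      rw [← hs]; nlinarith
  refine ⟨(k, m), ?_, hmem, ?_⟩
  · intro i
    show m i < 2 ^ k
    have hlt : (x i - c i) / s < (2:ℝ) ^ k := by
      rw [div_lt_iff₀ hs0]
      have := (hx' i).2
      nlinarith
    have := (Nat.floor_lt (hnn i)).2 (by exact_mod_cast hlt)
    exact_mod_cast this
  · intro y hy
    rw [mem_cube] at hy hmem
    rw [Metric.mem_ball, EuclideanSpace.dist_eq]
    have hcoord : ∀ i, dist (y i) (x i) ≤ s := by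
      intro i
      obtain ⟨hy1, hy2⟩ := hy i
      obtain ⟨hx1, hx2⟩ := hmem i
      rw [Real.dist_eq, abs_le]
      rw [← hs] at hy1 hy2 hx1 hx2
      constructor <;> linarith
    have hsum : (∑ i, dist (y i) (x i) ^ 2) ≤ (n : ℝ) * s ^ 2 := by
      calc (∑ i, dist (y i) (x i) ^ 2) ≤ ∑ _i : Fin n, s ^ 2 :=
            Finset.sum_le_sum fun i _ => by
              have h1 := hcoord i
              have h2 := dist_nonneg (x := y i) (y := x i)
              nlinarith
        _ = (n : ℝ) * s ^ 2 := by simp [mul_comm]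
    calc Real.sqrt (∑ i, dist (y i) (x i) ^ 2) ≤ Real.sqrt (((n+1:ℝ) * s) ^ 2) := by
          apply Real.sqrt_le_sqrt
          nlinarith
      _ = (n+1:ℝ) * s := Real.sqrt_sq (by positivity)
      _ < ε := hsmall

end CZ

theorem calderon_zygmund_decomposition {n : ℕ} (r : ℝ) (hr : 0 < r) (c : Fin n → ℝ)
    (A B : Set (EuclideanSpace ℝ (Fin n))) (hA : MeasurableSet A) (hB : MeasurableSet B)
    (hAB : A ⊆ B) (hBQ : B ⊆ ccube r c) (δ : ℝ) (hδ : δ ∈ Set.Ioo (0:ℝ) 1)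
    (hAsmall : volume A ≤ ENNReal.ofReal δ * volume (ccube r c))
    (hpred : ∀ k : ℕ, 1 ≤ k → ∀ m : Fin n → ℕ, (∀ i, m i < 2 ^ k) →
      ENNReal.ofReal δ * volume (dyadicSub r c k m) < volume (A ∩ dyadicSub r c k m) →
      dyadicSub r c (k - 1) (fun i => m i / 2) ⊆ B) :
    volume A ≤ ENNReal.ofReal δ * volume B := by
  obtain ⟨hδ0, hδ1⟩ := hδ
  set δ' := ENNReal.ofReal δ with hδ'
  set Bad : CZ.Idx n → Prop :=
    fun q => CZ.valid q ∧ δ' * volume (CZ.cube r c q) < volume (A ∩ CZ.cube r c q) with hBad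
  have hQ : volume (ccube r c) ≠ ⊤ := CZ.volume_ccube_ne_top r c
  have cube_root : CZ.cube r c (0, fun _ => 0) = ccube r c := by
    ext y
    simp [CZ.cube, dyadicSub, ccube]
  have hroot : ∀ q, CZ.valid q → q.1 = 0 → ¬ Bad q := by
    rintro ⟨k, mf⟩ hv h0 hb
    simp only at h0
    subst h0
    have hm : mf = fun _ => 0 := funext fun i => by have := hv i; simpa using this
    subst hm
    obtain ⟨-, hlt⟩ := hb
    rw [cube_root] at hlt
    exact absurd hlt (not_lt.2 (le_trans (measure_mono Set.inter_subset_left) hAsmall))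
  set T₁ : Set (CZ.Idx n) := {p | CZ.valid p ∧ ¬ Bad p ∧
    ∃ q', CZ.valid q' ∧ Bad q' ∧ 1 ≤ q'.1 ∧ p = (q'.1 - 1, fun i => q'.2 i / 2)} with hT₁
  set W : Set (EuclideanSpace ℝ (Fin n)) := ⋃ p ∈ T₁, CZ.cube r c p with hW
  have hWB : W ⊆ B := by
    refine Set.iUnion₂_subset fun p hp => ?_
    obtain ⟨hpv, hpg, q', hq'v, hq'b, hq'1, rfl⟩ := hp
    exact hpred q'.1 hq'1 q'.2 hq'v hq'b.2
  have hT₁good : ∀ p ∈ T₁, volume (A ∩ CZ.cube r c p) ≤ δ' * volume (CZ.cube r c p) := by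
    intro p hp
    obtain ⟨hpv, hpg, -⟩ := hp
    by_contra h
    exact hpg ⟨hpv, lt_of_not_ge h⟩
  have hkeyW : volume (A ∩ W) ≤ δ' * volume W := CZ.key hr c T₁ A hA hT₁good
  set D : Set (EuclideanSpace ℝ (Fin n)) := ⋃ q ∈ {q | Bad q}, CZ.cube r c q with hD
  have hDW : D ⊆ W := by
    refine Set.iUnion₂_subset fun q hq => ?_
    obtain ⟨p, hpv, hpb, hpg, hw⟩ := CZ.exists_good_ancestor Bad hroot q hq.1 hq
    refine (CZ.cube_subset hr c hpb).trans ?_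
    exact Set.subset_biUnion_of_mem (show p ∈ T₁ from ⟨hpv, hpg, hw⟩)
  set A' : Set (EuclideanSpace ℝ (Fin n)) := A \ D with hA'def
  have hA'm : MeasurableSet A' := hA.diff (MeasurableSet.biUnion (Set.to_countable _)
    fun q _ => CZ.measurableSet_cube r c q)
  have hgood : ∀ p, CZ.valid p → volume (A' ∩ CZ.cube r c p) ≤ δ' * volume (CZ.cube r c p) := by
    intro p hpv
    by_cases hb : Bad p
    · have he : A' ∩ CZ.cube r c p = ∅ := by
        apply Set.eq_empty_of_forall_notMem
        rintro x ⟨hxA', hxc⟩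
        exact hxA'.2 (Set.mem_biUnion hb hxc)
      simp [he]
    · have h1 : ¬ (δ' * volume (CZ.cube r c p) < volume (A ∩ CZ.cube r c p)) :=
        fun h => hb ⟨hpv, h⟩
      exact le_trans (measure_mono (Set.inter_subset_inter_left _ Set.diff_subset)) (not_lt.1 h1)
  have hfin : volume A' ≠ ⊤ := by
    refine ne_top_of_le_ne_top hQ (measure_mono ?_)
    exact fun x hx => hBQ (hAB hx.1)
  have hδ'1 : δ' < 1 := ENNReal.ofReal_lt_one.2 hδ1
  have hA'0 : volume A' = 0 := by
    have hstep : ∀ ε : ℝ≥0∞, 0 < ε → volume A' ≤ δ' * volume A' + ε := by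
      intro ε hε
      obtain ⟨U, hUsub, hUopen, hUvol⟩ := Set.exists_isOpen_lt_add A' hfin hε.ne'
      set SU : Set (CZ.Idx n) := {p | CZ.valid p ∧ CZ.cube r c p ⊆ U} with hSU
      have hsub : A' ⊆ ⋃ p ∈ SU, CZ.cube r c p := by
        intro x hx
        have hxU : x ∈ U := hUsub hx
        obtain ⟨ε', hε', hball⟩ := Metric.isOpen_iff.1 hUopen x hxU
        obtain ⟨p, hpv, hxp, hpball⟩ := CZ.exists_small_cube hr c (hBQ (hAB hx.1)) hε'
        exact Set.mem_biUnion (show p ∈ SU from ⟨hpv, hpball.trans hball⟩) hxp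
      have h1 : A' ∩ (⋃ p ∈ SU, CZ.cube r c p) = A' :=
        Set.inter_eq_self_of_subset_left hsub
      have h2 := CZ.key hr c SU A' hA'm (fun p hp => hgood p hp.1)
      have h3 : volume (⋃ p ∈ SU, CZ.cube r c p) ≤ volume U :=
        measure_mono (Set.iUnion₂_subset fun p hp => hp.2)
      calc volume A' = volume (A' ∩ ⋃ p ∈ SU, CZ.cube r c p) := by rw [h1]
        _ ≤ δ' * volume (⋃ p ∈ SU, CZ.cube r c p) := h2
        _ ≤ δ' * volume U := mul_le_mul_right h3 _
        _ ≤ δ' * (volume A' + ε) := mul_le_mul_right hUvol.le _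
        _ = δ' * volume A' + δ' * ε := by rw [mul_add]
        _ ≤ δ' * volume A' + ε := by
            refine add_le_add_right ?_ _
            calc δ' * ε ≤ 1 * ε := mul_le_mul_left hδ'1.le ε
              _ = ε := one_mul ε
    have hle : volume A' ≤ δ' * volume A' := by
      refine ENNReal.le_of_forall_pos_le_add fun ε hε _ => ?_
      exact hstep ε (ENNReal.coe_pos.2 hε)
    by_contra h0
    have hlt : δ' * volume A' < 1 * volume A' :=
      ENNReal.mul_lt_mul_left h0 hfin hδ'1
    rw [one_mul] at hlt
    exact absurd (lt_of_le_of_lt hle hlt) (lt_irrefl _)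
  have h2 : volume (A \ W) = 0 := by
    apply measure_mono_null _ hA'0
    intro x hx
    exact ⟨hx.1, fun hxD => hx.2 (hDW hxD)⟩
  calc volume A ≤ volume (A ∩ W) + volume (A \ W) := measure_le_inter_add_diff _ _ _
    _ = volume (A ∩ W) := by rw [h2, add_zero]
    _ ≤ δ' * volume W := hkeyW
    _ ≤ δ' * volume B := mul_le_mul_right (measure_mono hWB) _
end

section
/- Key integral computation in the ABP estimate: let n ≥ 2, μ > 0, M_F ≥ 0 and M > 0 with M ≥ M_F, and let g(p) = (|p|^{n/(n−1)} + μ^{n/(n−1)})^{1−n} on ℝⁿ. Then g(p) ≥ 2^{2−n}(|p|ⁿ + μⁿ)^{−1} for all p, and ∫_{B_M \ B_{M_F}} g(p) dp ≥ (2^{2−n}/n)·ω_n·ln((Mⁿ + μⁿ)/(M_Fⁿ + μⁿ)), where ω_n is the volume of the unit ball in ℝⁿ. -/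
open MeasureTheory Set Metric

private lemma rpow_add_le_aux {a b p : ℝ} (ha : 0 ≤ a) (hb : 0 ≤ b) (hp : 1 ≤ p) :
    (a + b) ^ p ≤ 2 ^ (p - 1) * (a ^ p + b ^ p) := by
  lift a to NNReal using ha
  lift b to NNReal using hb
  exact_mod_cast NNReal.rpow_add_le_mul_rpow_add_rpow a b hp

private lemma key_pointwise {n : ℕ} (hn : 2 ≤ n) {μ : ℝ} (hμ : 0 < μ) {x : ℝ} (hx : 0 ≤ x) :
    (2 : ℝ) ^ (2 - (n : ℝ)) * (x ^ (n : ℝ) + μ ^ (n : ℝ))⁻¹ ≤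
      (x ^ ((n : ℝ) / ((n : ℝ) - 1)) + μ ^ ((n : ℝ) / ((n : ℝ) - 1))) ^ (1 - (n : ℝ)) := by
  have h2 : (2 : ℝ) ≤ (n : ℝ) := by exact_mod_cast hn
  set nn : ℝ := (n : ℝ) with hnn
  set q : ℝ := nn / (nn - 1) with hq
  have ha : 0 ≤ x ^ q := Real.rpow_nonneg hx q
  have hb : 0 < μ ^ q := Real.rpow_pos_of_pos hμ q
  have hs : 0 < x ^ q + μ ^ q := by linarith
  have hqe : q * (nn - 1) = nn := div_mul_cancel₀ _ (by linarith)
  have hxq : (x ^ q) ^ (nn - 1) = x ^ nn := by rw [← Real.rpow_mul hx, hqe]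
  have hmq : (μ ^ q) ^ (nn - 1) = μ ^ nn := by rw [← Real.rpow_mul hμ.le, hqe]
  have hkey : (x ^ q + μ ^ q) ^ (nn - 1) ≤ 2 ^ (nn - 2) * (x ^ nn + μ ^ nn) := by
    have h := rpow_add_le_aux ha hb.le (by linarith : (1 : ℝ) ≤ nn - 1)
    rw [hxq, hmq, show nn - 1 - 1 = nn - 2 by ring] at h
    exact h
  have hx0 : 0 < x ^ nn + μ ^ nn := by
    have h1 := Real.rpow_pos_of_pos hμ nn
    have h2 := Real.rpow_nonneg hx nn
    linarith
  rw [show (1 : ℝ) - nn = -(nn - 1) by ring, Real.rpow_neg hs.le,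
    show (2 : ℝ) ^ (2 - nn) = ((2 : ℝ) ^ (nn - 2))⁻¹ by
      rw [← Real.rpow_neg (by norm_num), neg_sub], ← mul_inv]
  exact inv_anti₀ (Real.rpow_pos_of_pos hs _) hkey

theorem abp_integral_computation {n : ℕ} (hn : 2 ≤ n) (μ MF M : ℝ) (hμ : 0 < μ)
    (hMF : 0 ≤ MF) (hM : 0 < M) (hMFM : MF ≤ M) :
    let g : EuclideanSpace ℝ (Fin n) → ℝ := fun p =>
      (‖p‖ ^ ((n : ℝ) / ((n : ℝ) - 1)) + μ ^ ((n : ℝ) / ((n : ℝ) - 1))) ^ (1 - (n : ℝ))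
    (∀ p : EuclideanSpace ℝ (Fin n),
      (2 : ℝ) ^ (2 - (n : ℝ)) * (‖p‖ ^ (n : ℝ) + μ ^ (n : ℝ))⁻¹ ≤ g p) ∧
    ((2 : ℝ) ^ (2 - (n : ℝ)) / n) *
        (volume (Metric.ball (0 : EuclideanSpace ℝ (Fin n)) 1)).toReal *
        Real.log ((M ^ (n : ℝ) + μ ^ (n : ℝ)) / (MF ^ (n : ℝ) + μ ^ (n : ℝ)))
      ≤ ∫ p in Metric.ball (0 : EuclideanSpace ℝ (Fin n)) M \
          Metric.ball (0 : EuclideanSpace ℝ (Fin n)) MF, g p := by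
  intro g
  have h2 : (2 : ℝ) ≤ (n : ℝ) := by exact_mod_cast hn
  refine ⟨fun p => key_pointwise hn hμ (norm_nonneg p), ?_⟩
  set nn : ℝ := (n : ℝ) with hnn
  have hnz : nn ≠ 0 := by positivity
  set q : ℝ := nn / (nn - 1) with hq
  set G : ℝ → ℝ := fun r => (r ^ q + μ ^ q) ^ (1 - nn) with hGdef
  have hg : ∀ p : EuclideanSpace ℝ (Fin n), g p = G ‖p‖ := fun p => rfl
  haveI : Nonempty (Fin n) := ⟨⟨0, by omega⟩⟩
  set ω : ℝ := (volume (Metric.ball (0 : EuclideanSpace ℝ (Fin n)) 1)).toReal with hω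
  have hω0 : 0 ≤ ω := ENNReal.toReal_nonneg
  have hposfun : ∀ y : ℝ, 0 ≤ y → 0 < y ^ nn + μ ^ nn := fun y hy => by
    have h1 := Real.rpow_pos_of_pos hμ nn
    have h2 := Real.rpow_nonneg hy nn
    linarith
  -- Step A : write the set integral as an integral of a function of the norm
  have hA : (∫ p in Metric.ball (0 : EuclideanSpace ℝ (Fin n)) M \
        Metric.ball (0 : EuclideanSpace ℝ (Fin n)) MF, g p)
      = ∫ p : EuclideanSpace ℝ (Fin n), (Ico MF M).indicator G ‖p‖ := by
    rw [← integral_indicator (measurableSet_ball.diff measurableSet_ball)]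
    congr 1
    ext p
    by_cases hp : p ∈ Metric.ball (0 : EuclideanSpace ℝ (Fin n)) M \
        Metric.ball (0 : EuclideanSpace ℝ (Fin n)) MF
    · rw [Set.indicator_of_mem hp, Set.indicator_of_mem, hg]
      obtain ⟨h1, h2⟩ := hp
      rw [mem_ball_zero_iff] at h1
      rw [mem_ball_zero_iff] at h2
      exact ⟨not_lt.1 h2, h1⟩
    · rw [Set.indicator_of_notMem hp, Set.indicator_of_notMem]
      intro hmem
      exact hp ⟨mem_ball_zero_iff.2 hmem.2,
        fun hc => absurd (mem_ball_zero_iff.1 hc) (not_lt.2 hmem.1)⟩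
  -- Step B : polar coordinates
  have hB := integral_fun_norm_addHaar (volume : Measure (EuclideanSpace ℝ (Fin n)))
    ((Ico MF M).indicator G)
  simp only [finrank_euclideanSpace_fin, nsmul_eq_mul, smul_eq_mul] at hB
  rw [measureReal_def, ← hω] at hB
  -- Step C : the weighted radial integral over `Ioi 0` equals an integral over `Ioc MF M`
  have hsetae : ((Ioi (0 : ℝ) ∩ Ico MF M : Set ℝ)) =ᵐ[volume] (Ioc MF M : Set ℝ) := by
    have h1 : ((Ioi (0 : ℝ) ∩ Ico MF M : Set ℝ)) =ᵐ[volume] (Ico MF M : Set ℝ) := by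
      rw [MeasureTheory.ae_eq_set]
      constructor
      · exact measure_mono_null (fun y hy => (hy.2 hy.1.2).elim) (measure_empty)
      · refine measure_mono_null ?_ (measure_singleton (0 : ℝ))
        rintro y ⟨hyI, hnot⟩
        have : ¬ (0 < y) := fun h => hnot ⟨h, hyI⟩
        have hy0 : 0 ≤ y := le_trans hMF hyI.1
        simp [le_antisymm (not_lt.1 this) hy0]
    exact h1.trans Ico_ae_eq_Ioc
  have hC : (∫ y in Ioi (0 : ℝ), y ^ (n - 1) * (Ico MF M).indicator G y)
      = ∫ y in Ioc MF M, y ^ (n - 1) * G y := by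
    have hind : ∀ y : ℝ, y ^ (n - 1) * (Ico MF M).indicator G y
        = (Ico MF M).indicator (fun z => z ^ (n - 1) * G z) y := by
      intro y
      by_cases hy : y ∈ Ico MF M <;> simp [Set.indicator, hy]
    simp_rw [hind]
    rw [setIntegral_indicator measurableSet_Ico]
    exact setIntegral_congr_set hsetae
  have hD : (∫ y in Ioc MF M, y ^ (n - 1) * G y) = ∫ y in MF..M, y ^ (n - 1) * G y :=
    (intervalIntegral.integral_of_le hMFM).symm
  -- continuity / integrability facts
  have hGcont : ContinuousOn G (Set.uIcc MF M) := by
    rw [Set.uIcc_of_le hMFM]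
    intro y hy
    have hy0 : 0 ≤ y := hMF.trans hy.1
    have hbase : ContinuousAt (fun z : ℝ => z ^ q + μ ^ q) y :=
      (Real.continuousAt_rpow_const y q (Or.inr (le_of_lt (by rw [hq]; apply div_pos <;> linarith)))).add continuousAt_const
    have hpos : 0 < y ^ q + μ ^ q := by
      have h1 := Real.rpow_nonneg hy0 q
      have h2 := Real.rpow_pos_of_pos hμ q
      linarith
    exact (hbase.rpow_const (Or.inl hpos.ne')).continuousWithinAt
  have hLcont : ContinuousOn (fun y : ℝ => y ^ (n - 1) * (y ^ nn + μ ^ nn)⁻¹)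
      (Set.uIcc MF M) := by
    rw [Set.uIcc_of_le hMFM]
    intro y hy
    have hy0 : 0 ≤ y := hMF.trans hy.1
    have hbase : ContinuousAt (fun z : ℝ => z ^ nn + μ ^ nn) y :=
      (Real.continuousAt_rpow_const y nn (Or.inr (by positivity))).add continuousAt_const
    exact (((continuous_pow (n - 1)).continuousAt).mul
      (hbase.inv₀ (hposfun y hy0).ne')).continuousWithinAt
  have hint1 : IntervalIntegrable (fun y : ℝ => y ^ (n - 1) * G y) volume MF M :=
    (((continuous_pow (n - 1)).continuousOn).mul hGcont).intervalIntegrable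
  have hintL : IntervalIntegrable (fun y : ℝ => y ^ (n - 1) * (y ^ nn + μ ^ nn)⁻¹)
      volume MF M := hLcont.intervalIntegrable
  have hint2 : IntervalIntegrable
      (fun y : ℝ => y ^ (n - 1) * ((2 : ℝ) ^ (2 - nn) * (y ^ nn + μ ^ nn)⁻¹)) volume MF M := by
    have : (fun y : ℝ => y ^ (n - 1) * ((2 : ℝ) ^ (2 - nn) * (y ^ nn + μ ^ nn)⁻¹))
        = fun y : ℝ => (2 : ℝ) ^ (2 - nn) * (y ^ (n - 1) * (y ^ nn + μ ^ nn)⁻¹) := by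
      funext y; ring
    rw [this]
    exact hintL.const_mul _
  -- monotonicity
  have hmono : (∫ y in MF..M, y ^ (n - 1) * ((2 : ℝ) ^ (2 - nn) * (y ^ nn + μ ^ nn)⁻¹))
      ≤ ∫ y in MF..M, y ^ (n - 1) * G y := by
    refine intervalIntegral.integral_mono_on hMFM hint2 hint1 (fun y hy => ?_)
    have hy0 : 0 ≤ y := hMF.trans hy.1
    exact mul_le_mul_of_nonneg_left (key_pointwise hn hμ hy0) (pow_nonneg hy0 _)
  -- FTC computation
  have hFTC : (∫ y in MF..M, y ^ (n - 1) * (y ^ nn + μ ^ nn)⁻¹)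
      = (1 / nn) * Real.log (M ^ nn + μ ^ nn) - (1 / nn) * Real.log (MF ^ nn + μ ^ nn) := by
    refine intervalIntegral.integral_eq_sub_of_hasDerivAt
      (f := fun z : ℝ => (1 / nn) * Real.log (z ^ nn + μ ^ nn)) (fun y hy => ?_) hintL
    rw [Set.uIcc_of_le hMFM] at hy
    have hy0 : 0 ≤ y := hMF.trans hy.1
    have hpos := hposfun y hy0
    have hd : HasDerivAt (fun z : ℝ => z ^ nn + μ ^ nn) (nn * y ^ (nn - 1)) y :=
      (Real.hasDerivAt_rpow_const (Or.inr (by linarith : (1 : ℝ) ≤ nn))).add_const _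
    have hder := (hd.log hpos.ne').const_mul (1 / nn)
    convert hder using 1
    case e'_4 => rfl
    have hy1 : y ^ (nn - 1) = y ^ (n - 1 : ℕ) := by
      rw [← Real.rpow_natCast y (n - 1)]
      congr 1
      push_cast [Nat.cast_sub (by omega : 1 ≤ n)]
      ring
    rw [← hy1]
    field_simp
  have hlog : (1 / nn) * Real.log (M ^ nn + μ ^ nn) - (1 / nn) * Real.log (MF ^ nn + μ ^ nn)
      = (1 / nn) * Real.log ((M ^ nn + μ ^ nn) / (MF ^ nn + μ ^ nn)) := by
    rw [← mul_sub, Real.log_div (hposfun M hM.le).ne' (hposfun MF hMF).ne']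
  -- pulling out the constant
  have hcm : (∫ y in MF..M, y ^ (n - 1) * ((2 : ℝ) ^ (2 - nn) * (y ^ nn + μ ^ nn)⁻¹))
      = (2 : ℝ) ^ (2 - nn) * ∫ y in MF..M, y ^ (n - 1) * (y ^ nn + μ ^ nn)⁻¹ := by
    have h : ∀ y : ℝ, y ^ (n - 1) * ((2 : ℝ) ^ (2 - nn) * (y ^ nn + μ ^ nn)⁻¹)
        = (2 : ℝ) ^ (2 - nn) * (y ^ (n - 1) * (y ^ nn + μ ^ nn)⁻¹) := fun y => by ring
    simp_rw [h]
    exact intervalIntegral.integral_const_mul _ _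
  -- assemble
  have hc : (0 : ℝ) < 2 ^ (2 - nn) := Real.rpow_pos_of_pos two_pos _
  have hlogR : 0 ≤ Real.log ((M ^ nn + μ ^ nn) / (MF ^ nn + μ ^ nn)) := by
    apply Real.log_nonneg
    rw [le_div_iff₀ (hposfun MF hMF), one_mul]
    have : MF ^ nn ≤ M ^ nn := Real.rpow_le_rpow hMF hMFM (by linarith)
    linarith
  rw [hA, hB, hC, hD]
  calc (2 : ℝ) ^ (2 - nn) / nn * ω *
        Real.log ((M ^ nn + μ ^ nn) / (MF ^ nn + μ ^ nn))
      ≤ (2 : ℝ) ^ (2 - nn) * ω *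
          Real.log ((M ^ nn + μ ^ nn) / (MF ^ nn + μ ^ nn)) := by
        exact mul_le_mul_of_nonneg_right
          (mul_le_mul_of_nonneg_right (div_le_self hc.le (by linarith)) hω0) hlogR
    _ = nn * (ω * ((2 : ℝ) ^ (2 - nn) *
          ((1 / nn) * Real.log ((M ^ nn + μ ^ nn) / (MF ^ nn + μ ^ nn))))) := by
        field_simp
    _ = nn * (ω * ∫ y in MF..M, y ^ (n - 1) * ((2 : ℝ) ^ (2 - nn) * (y ^ nn + μ ^ nn)⁻¹)) := by
        rw [hcm, hFTC, hlog]
    _ ≤ nn * (ω * ∫ y in MF..M, y ^ (n - 1) * G y) := by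
        refine mul_le_mul_of_nonneg_left (mul_le_mul_of_nonneg_left hmono hω0) ?_
        positivity
end
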